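/- arXiv:1811.12577 — 3 statements merged into one kernel-verified Lean document; each statement's English description precedes it below -/
import Mathlib

section
/- Let k be a field, (R, 𝔪) a local k-algebra, and 𝔞 an ideal contained in 𝔪. For all natural numbers ℓ and n with n ≥ ℓ + 1, one has (𝔞 + 𝔪^n)^{jc_ℓ} = 𝔞^{jc_ℓ}; consequently 𝔞^{jc_ℓ} = ⋂_{n ≥ 0} (𝔞 + 𝔪^n)^{jc_ℓ}. -/
open PowerSeries

universe u

/-- A "based `ℓ`-jet" on a local `k`-algebra `R` with coefficients in a commutative
`k`-algebra `S` is a `k`-algebra homomorphism `φ : R → S[t]/(t^(ℓ+1))` sending the maximal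
ideal into the image of the ideal `(t)`.  The *`ℓ`-jet closure* `𝔞^{jc_ℓ}` of an ideal
`𝔞 ⊆ 𝔪` is the set of `f ∈ R` killed by every based `ℓ`-jet that kills `𝔞`. -/
def jetClosure (k R : Type u) [Field k] [CommRing R] [Algebra k R] [IsLocalRing R]
    (ℓ : ℕ) (𝔞 : Ideal R) : Set R :=
  {f | ∀ (S : Type u) [CommRing S] [Algebra k S]
    (φ : R →ₐ[k] (Polynomial S ⧸ Ideal.span {(Polynomial.X : Polynomial S) ^ (ℓ + 1)})),
    (∀ m ∈ IsLocalRing.maximalIdeal R, φ m ∈ Ideal.span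
      {Ideal.Quotient.mk (Ideal.span {(Polynomial.X : Polynomial S) ^ (ℓ + 1)}) Polynomial.X}) →
    (∀ a ∈ 𝔞, φ a = 0) → φ f = 0}

/-- For an ideal `𝔞 ⊆ 𝔪` of a local `k`-algebra and natural numbers `ℓ, n` with
`n ≥ ℓ + 1`, one has `(𝔞 + 𝔪ⁿ)^{jc_ℓ} = 𝔞^{jc_ℓ}`; consequently
`𝔞^{jc_ℓ} = ⋂ₙ (𝔞 + 𝔪ⁿ)^{jc_ℓ}`. -/
theorem jetClosure_add_pow_eq (k R : Type u) [Field k] [CommRing R] [Algebra k R]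
    [IsLocalRing R] (𝔞 : Ideal R) (h𝔞 : 𝔞 ≤ IsLocalRing.maximalIdeal R) :
    (∀ (ℓ n : ℕ), ℓ + 1 ≤ n →
      jetClosure k R ℓ (𝔞 + IsLocalRing.maximalIdeal R ^ n) = jetClosure k R ℓ 𝔞) ∧
    ∀ ℓ : ℕ,
      jetClosure k R ℓ 𝔞 = ⋂ (n : ℕ), jetClosure k R ℓ (𝔞 + IsLocalRing.maximalIdeal R ^ n) := by
  have mono : ∀ (ℓ : ℕ) (I J : Ideal R), I ≤ J →
      jetClosure k R ℓ I ⊆ jetClosure k R ℓ J := by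
    intro ℓ I J hIJ f hf S _ _ φ hmax hJ
    exact hf S φ hmax (fun a ha => hJ a (hIJ ha))
  have main : ∀ (ℓ n : ℕ), ℓ + 1 ≤ n →
      jetClosure k R ℓ (𝔞 + IsLocalRing.maximalIdeal R ^ n) = jetClosure k R ℓ 𝔞 := by
    intro ℓ n hn
    apply Set.Subset.antisymm
    · intro f hf S _ _ φ hmax h𝔞0
      apply hf S φ hmax
      intro a ha
      rw [Submodule.add_eq_sup, Submodule.mem_sup] at ha
      obtain ⟨b, hb, c, hc, rfl⟩ := ha
      have hc0 : φ c = 0 := by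
        have h1 : Ideal.map φ.toRingHom (IsLocalRing.maximalIdeal R ^ n) ≤
            Ideal.span {Ideal.Quotient.mk
              (Ideal.span {(Polynomial.X : Polynomial S) ^ (ℓ + 1)}) Polynomial.X} ^ n := by
          rw [Ideal.map_pow]
          exact Ideal.pow_right_mono
            (Ideal.map_le_iff_le_comap.2 (fun m hm => Ideal.mem_comap.2 (hmax m hm))) n
        have h2 := h1 (Ideal.mem_map_of_mem φ.toRingHom hc)
        rw [Ideal.span_singleton_pow] at h2
        obtain ⟨d, hd⟩ := Ideal.mem_span_singleton'.1 h2
        have hzero : (Ideal.Quotient.mk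
            (Ideal.span {(Polynomial.X : Polynomial S) ^ (ℓ + 1)}) Polynomial.X) ^ n = 0 := by
          rw [← map_pow, Ideal.Quotient.eq_zero_iff_mem, Ideal.mem_span_singleton]
          exact pow_dvd_pow _ hn
        have : φ c = d * (Ideal.Quotient.mk
            (Ideal.span {(Polynomial.X : Polynomial S) ^ (ℓ + 1)}) Polynomial.X) ^ n := hd.symm
        rw [this, hzero, mul_zero]
      rw [map_add, h𝔞0 b hb, hc0, add_zero]
    · exact mono ℓ _ _ le_sup_left
  refine ⟨main, fun ℓ => ?_⟩
  apply Set.Subset.antisymm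
  · exact Set.subset_iInter fun n => mono ℓ _ _ le_sup_left
  · intro f hf
    have h := Set.mem_iInter.1 hf (ℓ + 1)
    rwa [main ℓ (ℓ + 1) le_rfl] at h
end

section
/- Let k be a field, (R, 𝔪) a local k-algebra, and 𝔞 an ideal contained in 𝔪. Then 𝔞^ac = ⋂_{n ≥ 0} (𝔞 + 𝔪^n)^ac. -/
open PowerSeries

universe u

/-- A "based arc" on a local `k`-algebra `R` with coefficients in a commutative `k`-algebra `S`
is a `k`-algebra homomorphism `φ : R → S[[t]]` with `φ(𝔪) ⊆ (t)`.  The *arc closure* `𝔞^ac` of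
an ideal `𝔞 ⊆ 𝔪` is the set of `f ∈ R` killed by every based arc that kills `𝔞`. -/
def arcClosure (k R : Type u) [Field k] [CommRing R] [Algebra k R] [IsLocalRing R]
    (𝔞 : Ideal R) : Set R :=
  {f | ∀ (S : Type u) [CommRing S] [Algebra k S] (φ : R →ₐ[k] PowerSeries S),
    (∀ m ∈ IsLocalRing.maximalIdeal R, (constantCoeff : PowerSeries S →+* S) (φ m) = 0) →
    (∀ a ∈ 𝔞, φ a = 0) → φ f = 0}

/-- For an ideal `𝔞 ⊆ 𝔪` of a local `k`-algebra `(R, 𝔪)`, the arc closure satisfies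
`𝔞^ac = ⋂ₙ (𝔞 + 𝔪ⁿ)^ac`. -/
theorem arcClosure_eq_iInter_arcClosure_add_pow (k R : Type u) [Field k]
    [CommRing R] [Algebra k R] [IsLocalRing R]
    (𝔞 : Ideal R) (h𝔞 : 𝔞 ≤ IsLocalRing.maximalIdeal R) :
    arcClosure k R 𝔞 = ⋂ (n : ℕ), arcClosure k R (𝔞 + IsLocalRing.maximalIdeal R ^ n) := by
  apply Set.Subset.antisymm
  · intro f hf
    refine Set.mem_iInter.mpr fun n => ?_
    intro S _ _ φ hm ha
    exact hf S φ hm (fun a haa => ha a (by rw [Ideal.add_eq_sup]; exact Ideal.mem_sup_left haa))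
  · intro f hf
    rw [Set.mem_iInter] at hf
    intro S _ _ φ hm ha
    ext i
    set n := i + 1 with hn
    -- the truncation ring
    set Q := Polynomial S ⧸ Ideal.span {(Polynomial.X : Polynomial S) ^ n} with hQ
    set c : Q := Ideal.Quotient.mk _ (Polynomial.X : Polynomial S) with hc
    have hcn : c ^ n = 0 := by
      rw [hc, ← map_pow, Ideal.Quotient.eq_zero_iff_mem]
      exact Ideal.mem_span_singleton_self _
    set θ : PowerSeries S →+* PowerSeries Q :=
      (rescale c).comp (PowerSeries.map (algebraMap S Q)) with hθ
    have hθcoeff : ∀ (g : PowerSeries S) (j : ℕ),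
        (coeff j) (θ g) = c ^ j * algebraMap S Q ((coeff j) g) := by
      intro g j
      rw [hθ, RingHom.comp_apply, coeff_rescale, PowerSeries.coeff_map]
    -- θ kills anything divisible by X^n
    have hθkill : ∀ g : PowerSeries S, (X : PowerSeries S) ^ n ∣ g → θ g = 0 := by
      intro g hg
      ext j
      rw [hθcoeff, map_zero]
      rcases lt_or_ge j n with hj | hj
      · rw [(X_pow_dvd_iff.mp hg) j hj, map_zero, mul_zero]
      · obtain ⟨d, rfl⟩ := Nat.exists_eq_add_of_le hj
        simp [pow_add, hcn]
    -- the truncated arc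
    set ψ : R →ₐ[k] PowerSeries Q :=
      { toRingHom := θ.comp φ.toRingHom
        commutes' := by
          intro r
          have hresC : ∀ x : Q, rescale c (C x) = C x := by
            intro x
            ext j
            rw [coeff_rescale]; simp only [PowerSeries.coeff_C]
            split_ifs with h
            · subst h; simp
            · simp
          show (θ.comp φ.toRingHom) ((algebraMap k R) r) = algebraMap k (PowerSeries Q) r
          rw [RingHom.comp_apply]
          rw [show φ.toRingHom ((algebraMap k R) r) = C (algebraMap k S r) by
            rw [AlgHom.toRingHom_eq_coe, RingHom.coe_coe, AlgHom.commutes,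
              PowerSeries.algebraMap_apply]]
          rw [PowerSeries.algebraMap_apply, hθ, RingHom.comp_apply, PowerSeries.map_C, hresC,
            ← IsScalarTower.algebraMap_apply] } with hψ
    have hψapp : ∀ r : R, ψ r = θ (φ r) := fun r => rfl
    -- ψ is a based arc
    have hψm : ∀ m ∈ IsLocalRing.maximalIdeal R, (constantCoeff : PowerSeries Q →+* Q) (ψ m) = 0 := by
      intro m hmm
      rw [hψapp, ← coeff_zero_eq_constantCoeff_apply, hθcoeff, pow_zero, one_mul,
        coeff_zero_eq_constantCoeff_apply, hm m hmm, map_zero]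
    -- φ maps 𝔪^n into (X^n)
    have hpow : ∀ m ∈ IsLocalRing.maximalIdeal R ^ n, (X : PowerSeries S) ^ n ∣ φ m := by
      intro m hmm
      have h1 : Ideal.map φ.toRingHom (IsLocalRing.maximalIdeal R) ≤
          Ideal.span {(X : PowerSeries S)} := by
        rw [Ideal.map_le_iff_le_comap]
        intro x hx
        rw [Ideal.mem_comap, Ideal.mem_span_singleton]
        exact X_dvd_iff.mpr (hm x hx)
      have h2 : φ m ∈ Ideal.map φ.toRingHom (IsLocalRing.maximalIdeal R ^ n) :=
        Ideal.mem_map_of_mem _ hmm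
      rw [Ideal.map_pow] at h2
      have h3 := (Ideal.pow_right_mono h1 n) h2
      rw [Ideal.span_singleton_pow, Ideal.mem_span_singleton] at h3
      exact h3
    -- ψ kills 𝔞 + 𝔪^n
    have hψa : ∀ a ∈ 𝔞 + IsLocalRing.maximalIdeal R ^ n, ψ a = 0 := by
      intro a haa
      rw [Ideal.add_eq_sup, Submodule.mem_sup] at haa
      obtain ⟨b, hb, m, hmm, rfl⟩ := haa
      rw [map_add, hψapp, hψapp, ha b hb, map_zero, zero_add]
      exact hθkill _ (hpow m hmm)
    have hψf : ψ f = 0 := hf n Q ψ hψm hψa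
    -- extract coefficient i
    have h0 : c ^ i * algebraMap S Q ((coeff i) (φ f)) = 0 := by
      rw [← hθcoeff, ← hψapp, hψf, map_zero]
    set s := (coeff i) (φ f) with hs
    have halg : algebraMap S Q s = Ideal.Quotient.mk _ (Polynomial.C s) := by
      rw [IsScalarTower.algebraMap_apply S (Polynomial S) Q]
      rfl
    rw [halg, hc, ← map_pow, ← map_mul, Ideal.Quotient.eq_zero_iff_mem,
      Ideal.mem_span_singleton] at h0
    obtain ⟨q, hq⟩ := h0
    have : s = ((Polynomial.X : Polynomial S) ^ i * Polynomial.C s).coeff i := by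
      rw [mul_comm, Polynomial.coeff_C_mul, Polynomial.coeff_X_pow, if_pos rfl, mul_one]
    rw [this, hq, mul_comm, Polynomial.coeff_mul_X_pow', if_neg (by omega)]
    simp
end

section
/- Let k be a field, (R, 𝔪) a local k-algebra, and 𝔞 an ideal contained in 𝔪. Then the arc closure equals the intersection of all finite jet closures: 𝔞^ac = ⋂_{ℓ ≥ 0} 𝔞^{jc_ℓ}. -/
open PowerSeries

universe u

section Aux

variable (S : Type u) [CommRing S] (n : ℕ)

/-- abbreviation for the jet ring -/
local notation "I" => Ideal.span {(Polynomial.X : Polynomial S) ^ (n + 1)}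

lemma mk_trunc_coe (r : Polynomial S) :
    Ideal.Quotient.mk (Ideal.span {(Polynomial.X : Polynomial S) ^ (n + 1)})
      (trunc (n + 1) (r : PowerSeries S)) =
    Ideal.Quotient.mk _ r := by
  rw [Ideal.Quotient.eq, Ideal.mem_span_singleton]
  rw [Polynomial.X_pow_dvd_iff]
  intro d hd
  simp [coeff_trunc, hd, Polynomial.coeff_coe]

noncomputable def truncQuot :
    PowerSeries S →+* Polynomial S ⧸ Ideal.span {(Polynomial.X : Polynomial S) ^ (n + 1)} where
  toFun p := Ideal.Quotient.mk _ (trunc (n + 1) p)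
  map_one' := by
    show Ideal.Quotient.mk _ (trunc (n + 1) (1 : PowerSeries S)) = 1
    rw [trunc_one]; simp
  map_zero' := by
    show Ideal.Quotient.mk _ (trunc (n + 1) (0 : PowerSeries S)) = 0
    rw [map_zero]; simp
  map_add' p q := by
    show Ideal.Quotient.mk _ (trunc (n + 1) (p + q)) = _
    rw [map_add]; simp
  map_mul' p q := by
    show Ideal.Quotient.mk _ (trunc (n + 1) (p * q)) =
      Ideal.Quotient.mk _ (trunc (n + 1) p) * Ideal.Quotient.mk _ (trunc (n + 1) q)
    rw [← trunc_trunc_mul_trunc, ← Polynomial.coe_mul, mk_trunc_coe, map_mul]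

lemma truncQuot_apply (p : PowerSeries S) :
    truncQuot S n p = Ideal.Quotient.mk _ (trunc (n + 1) p) := rfl

/-- the map `A → A[[t]]`, `X ↦ X·t`, where `A = S[X]/(X^(n+1))`. -/
noncomputable def jetToArc :
    (Polynomial S ⧸ Ideal.span {(Polynomial.X : Polynomial S) ^ (n + 1)}) →+*
    PowerSeries (Polynomial S ⧸ Ideal.span {(Polynomial.X : Polynomial S) ^ (n + 1)}) :=
  Ideal.Quotient.lift _
    (Polynomial.eval₂RingHom
      ((PowerSeries.C).comp ((Ideal.Quotient.mk _).comp Polynomial.C))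
      (PowerSeries.C (Ideal.Quotient.mk _ Polynomial.X) * PowerSeries.X))
    (by
      intro a ha
      rw [Ideal.mem_span_singleton] at ha
      obtain ⟨r, rfl⟩ := ha
      rw [map_mul, Polynomial.coe_eval₂RingHom, Polynomial.eval₂_X_pow, mul_pow,
        ← map_pow, ← map_pow]
      have h0 : Ideal.Quotient.mk (Ideal.span {(Polynomial.X : Polynomial S) ^ (n + 1)})
          (Polynomial.X ^ (n+1)) = 0 :=
        Ideal.Quotient.eq_zero_iff_mem.mpr (Ideal.mem_span_singleton_self _)
      rw [h0]
      simp)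

lemma jetToArc_mk (p : Polynomial S) :
    jetToArc S n (Ideal.Quotient.mk _ p) =
      Polynomial.eval₂ ((PowerSeries.C).comp ((Ideal.Quotient.mk _).comp Polynomial.C))
        (PowerSeries.C (Ideal.Quotient.mk _ Polynomial.X) * PowerSeries.X) p := rfl

lemma coeff_jetToArc_mk (p : Polynomial S) (j : ℕ) :
    PowerSeries.coeff j (jetToArc S n (Ideal.Quotient.mk _ p)) =
      Ideal.Quotient.mk _ (Polynomial.C (p.coeff j) * Polynomial.X ^ j) := by
  rw [jetToArc_mk, Polynomial.eval₂_eq_sum, Polynomial.sum, map_sum]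
  have key : ∀ i ∈ p.support,
      PowerSeries.coeff j
        (((PowerSeries.C).comp ((Ideal.Quotient.mk
            (Ideal.span {(Polynomial.X : Polynomial S) ^ (n + 1)})).comp Polynomial.C))
            (p.coeff i) *
          (PowerSeries.C (Ideal.Quotient.mk _ Polynomial.X) * PowerSeries.X) ^ i) =
      if i = j then Ideal.Quotient.mk _ (Polynomial.C (p.coeff j) * Polynomial.X ^ j) else 0 := by
    intro i _
    simp only [RingHom.comp_apply, mul_pow, ← map_pow, PowerSeries.coeff_C_mul,
      PowerSeries.coeff_X_pow, mul_ite, mul_one, mul_zero]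
    by_cases h : i = j
    · subst h; simp [map_mul, map_pow]
    · simp [h, Ne.symm h]
  rw [Finset.sum_congr rfl key, Finset.sum_ite_eq' p.support j]
  by_cases hj : j ∈ p.support
  · simp [hj]
  · rw [if_neg hj]
    rw [Polynomial.notMem_support_iff] at hj
    simp [hj]

lemma jetToArc_injective : Function.Injective (jetToArc S n) := by
  rw [injective_iff_map_eq_zero]
  intro a ha
  obtain ⟨p, rfl⟩ := Ideal.Quotient.mk_surjective a
  rw [Ideal.Quotient.eq_zero_iff_mem, Ideal.mem_span_singleton, Polynomial.X_pow_dvd_iff]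
  intro d hd
  have := coeff_jetToArc_mk S n p d
  rw [ha, map_zero] at this
  have h2 : (Polynomial.X : Polynomial S) ^ (n+1) ∣ Polynomial.C (p.coeff d) * Polynomial.X ^ d := by
    rw [← Ideal.mem_span_singleton, ← Ideal.Quotient.eq_zero_iff_mem, ← this]
  rw [Polynomial.X_pow_dvd_iff] at h2
  have := h2 d hd
  simpa using this

end Aux

/-- The arc closure of an ideal `𝔞 ⊆ 𝔪` of a local `k`-algebra equals the intersection of
all the finite jet closures: `𝔞^ac = ⋂_ℓ 𝔞^{jc_ℓ}`. -/
theorem arcClosure_eq_iInter_jetClosure (k R : Type u) [Field k] [CommRing R] [Algebra k R]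
    [IsLocalRing R] (𝔞 : Ideal R) (h𝔞 : 𝔞 ≤ IsLocalRing.maximalIdeal R) :
    arcClosure k R 𝔞 = ⋂ (ℓ : ℕ), jetClosure k R ℓ 𝔞 := by
  ext f
  simp only [Set.mem_iInter]
  constructor
  · -- arc closure ⊆ every jet closure
    intro hf ℓ S _ _ φ hbase hkill
    -- lift the jet to an arc with coefficients in `A = S[X]/(X^(ℓ+1))` via `X ↦ X·t`
    have hcomm : ∀ c : k,
        jetToArc S ℓ (algebraMap k
          (Polynomial S ⧸ Ideal.span {(Polynomial.X : Polynomial S) ^ (ℓ + 1)}) c) =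
        algebraMap k (PowerSeries
          (Polynomial S ⧸ Ideal.span {(Polynomial.X : Polynomial S) ^ (ℓ + 1)})) c := by
      intro c
      rw [← Ideal.Quotient.mk_algebraMap, Polynomial.algebraMap_apply, jetToArc_mk,
        Polynomial.eval₂_C, PowerSeries.algebraMap_apply, ← Ideal.Quotient.mk_algebraMap,
        Polynomial.algebraMap_apply]
      rfl
    let ψ : R →ₐ[k] PowerSeries
        (Polynomial S ⧸ Ideal.span {(Polynomial.X : Polynomial S) ^ (ℓ + 1)}) :=
      { toRingHom := (jetToArc S ℓ).comp φ.toRingHom,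
        commutes' := fun c => by
          show jetToArc S ℓ (φ (algebraMap k R c)) = _
          rw [AlgHom.commutes]
          exact hcomm c }
    have hψ : ψ f = 0 := by
      apply hf _ ψ
      · intro m hm
        have := hbase m hm
        rw [Ideal.mem_span_singleton] at this
        obtain ⟨c, hc⟩ := this
        show constantCoeff (jetToArc S ℓ (φ m)) = 0
        rw [hc, map_mul, map_mul]
        have : jetToArc S ℓ (Ideal.Quotient.mk _ (Polynomial.X : Polynomial S)) =
            PowerSeries.C (Ideal.Quotient.mk _ Polynomial.X) * PowerSeries.X := by
          rw [jetToArc_mk, Polynomial.eval₂_X]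
        rw [this, map_mul, constantCoeff_X, mul_zero, zero_mul]
      · intro a ha
        show jetToArc S ℓ (φ a) = 0
        rw [hkill a ha, map_zero]
    have h0 : jetToArc S ℓ (φ f) = jetToArc S ℓ 0 := by rw [map_zero]; exact hψ
    exact jetToArc_injective S ℓ h0
  · -- intersection of jet closures ⊆ arc closure
    intro hf S _ _ φ hbase hkill
    ext j
    rw [map_zero]
    -- use the `j`-th jet closure via truncation
    let χ : R →ₐ[k] (Polynomial S ⧸ Ideal.span {(Polynomial.X : Polynomial S) ^ (j + 1)}) :=
      { toRingHom := (truncQuot S j).comp φ.toRingHom,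
        commutes' := fun c => by
          show truncQuot S j (φ (algebraMap k R c)) = _
          rw [AlgHom.commutes, PowerSeries.algebraMap_apply, truncQuot_apply, trunc_C,
            ← Ideal.Quotient.mk_algebraMap, Polynomial.algebraMap_apply] }
    have hχ : χ f = 0 := by
      apply hf j S χ
      · intro m hm
        show truncQuot S j (φ m) ∈ _
        rw [truncQuot_apply, Ideal.mem_span_singleton]
        apply map_dvd
        rw [Polynomial.X_dvd_iff, coeff_trunc, if_pos (Nat.succ_pos j),
          coeff_zero_eq_constantCoeff_apply]
        exact hbase m hm
      · intro a ha
        show truncQuot S j (φ a) = 0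
        rw [hkill a ha, map_zero]
    have : truncQuot S j (φ f) = 0 := hχ
    rw [truncQuot_apply, Ideal.Quotient.eq_zero_iff_mem, Ideal.mem_span_singleton,
      Polynomial.X_pow_dvd_iff] at this
    have := this j (Nat.lt_succ_self j)
    rwa [coeff_trunc, if_pos (Nat.lt_succ_self j)] at this
end
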